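/- Let x̄, S be the sample mean and sum-of-squared-deviations matrix of a sample x₁,…,x_p ∈ ℝ^q whose joint matrix X has an elliptically contoured density with location 1_p μ' and scale I_p ⊗ Σ (Σ positive definite, p > q). Then x̄ is an unbiased estimator of μ, and if φ is the associated characteristic generator with φ'(0) finite, then E[S] = -2(p-1)φ'(0) Σ, so S/(−2(p−1)φ'(0)) is an unbiased estimator of Σ. -/

import Mathlib

open MeasureTheory Matrix Filter Topology

lemma sinc_tendsto : Tendsto (fun x : ℝ => Real.sin x / x) (𝓝[≠] (0:ℝ)) (𝓝 1) := by
  have h := Real.hasDerivAt_sin 0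
  rw [hasDerivAt_iff_tendsto_slope] at h
  simp only [Real.cos_zero] at h
  refine h.congr' ?_
  filter_upwards [self_mem_nhdsWithin] with x hx
  simp [slope_def_field, div_eq_inv_mul]

lemma cos_eq (x : ℝ) : Real.cos x = 1 - 2 * Real.sin (x/2)^2 := by
  have h1 : Real.cos (2 * (x/2)) = 2 * Real.cos (x/2)^2 - 1 := Real.cos_two_mul _
  have h2 := Real.sin_sq_add_cos_sq (x/2)
  have : (2 : ℝ) * (x/2) = x := by ring
  rw [this] at h1; linarith

lemma one_sub_cos_le_sq (x : ℝ) : 1 - Real.cos x ≤ x^2 / 2 := by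
  have h2 : |Real.sin (x/2)| ≤ |x/2| := Real.abs_sin_le_abs
  rw [cos_eq x]
  nlinarith [sq_abs (Real.sin (x/2)), sq_abs (x/2), abs_nonneg (Real.sin (x/2)), abs_nonneg (x/2)]

lemma one_sub_cos_tendsto : Tendsto (fun x : ℝ => (1 - Real.cos x)/x^2) (𝓝[≠] (0:ℝ)) (𝓝 (1/2)) := by
  have hmap : Tendsto (fun x : ℝ => x/2) (𝓝[≠] (0:ℝ)) (𝓝[≠] (0:ℝ)) := by
    apply tendsto_nhdsWithin_of_tendsto_nhds_of_eventually_within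
    · have : Tendsto (fun x : ℝ => x/2) (𝓝 (0:ℝ)) (𝓝 ((0:ℝ)/2)) :=
        (tendsto_id.div_const 2)
      simpa using this.mono_left nhdsWithin_le_nhds
    · filter_upwards [self_mem_nhdsWithin] with x hx
      simp only [Set.mem_compl_iff, Set.mem_singleton_iff] at hx ⊢
      intro h; exact hx (by linarith [h] )
  have h := (sinc_tendsto.comp hmap)
  have h2 : Tendsto (fun x : ℝ => (Real.sin (x/2)/(x/2))^2 / 2) (𝓝[≠] (0:ℝ)) (𝓝 (1/2)) := by
    simpa using ((h.pow 2).div_const 2)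
  refine h2.congr' ?_
  filter_upwards [self_mem_nhdsWithin] with x hx
  simp only [Set.mem_compl_iff, Set.mem_singleton_iff] at hx
  rw [cos_eq x]
  field_simp
  ring

lemma tendsto_mul_ne (u : ℝ) (hu : u ≠ 0) :
    Tendsto (fun t : ℝ => t * u) (𝓝[>] (0:ℝ)) (𝓝[≠] (0:ℝ)) := by
  apply tendsto_nhdsWithin_of_tendsto_nhds_of_eventually_within
  · have : Tendsto (fun t : ℝ => t * u) (𝓝 (0:ℝ)) (𝓝 ((0:ℝ) * u)) :=
      (continuous_id.mul continuous_const).tendsto 0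
    simpa using this.mono_left nhdsWithin_le_nhds
  · filter_upwards [self_mem_nhdsWithin] with t ht
    exact mul_ne_zero (ne_of_gt ht) hu

lemma tendsto_sq_mul_ne (s : ℝ) (hs : s ≠ 0) :
    Tendsto (fun t : ℝ => t^2 * s) (𝓝[>] (0:ℝ)) (𝓝[≠] (0:ℝ)) := by
  apply tendsto_nhdsWithin_of_tendsto_nhds_of_eventually_within
  · have : Tendsto (fun t : ℝ => t^2 * s) (𝓝 (0:ℝ)) (𝓝 ((0:ℝ)^2 * s)) :=
      ((continuous_pow 2).tendsto 0).mul_const s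
    simpa using this.mono_left nhdsWithin_le_nhds
  · filter_upwards [self_mem_nhdsWithin] with t ht
    exact mul_ne_zero (pow_ne_zero 2 (ne_of_gt ht)) hs

lemma scalar_moments {α : Type*} [MeasurableSpace α] (P : Measure α) [IsProbabilityMeasure P]
    (Y : α → ℝ) (hY : Integrable Y P) (hY2 : Integrable (fun a => (Y a)^2) P)
    (φ : ℝ → ℝ) (φ'0 : ℝ) (hφ : HasDerivAt φ φ'0 0) (hφ0 : φ 0 = 1)
    (c s : ℝ)
    (hsin : ∀ t : ℝ, ∫ a, Real.sin (t * Y a) ∂P = Real.sin (t*c) * φ (t^2 * s))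
    (hcos : ∀ t : ℝ, ∫ a, Real.cos (t * Y a) ∂P = Real.cos (t*c) * φ (t^2 * s)) :
    (∫ a, Y a ∂P = c) ∧ (∫ a, (Y a)^2 ∂P = c^2 - 2*φ'0*s) := by
  set l : Filter ℝ := 𝓝[>] (0:ℝ) with hl
  have hmeas : ∀ t : ℝ, AEStronglyMeasurable (fun a => Real.sin (t * Y a)) P :=
    fun t => Real.continuous_sin.comp_aestronglyMeasurable (hY.aestronglyMeasurable.const_mul t)
  have hmeasc : ∀ t : ℝ, AEStronglyMeasurable (fun a => Real.cos (t * Y a)) P :=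
    fun t => Real.continuous_cos.comp_aestronglyMeasurable (hY.aestronglyMeasurable.const_mul t)
  have hphicont : Tendsto (fun t : ℝ => φ (t^2 * s)) l (𝓝 1) := by
    have h1 : Tendsto (fun t : ℝ => t^2 * s) l (𝓝 0) := by
      have : Tendsto (fun t : ℝ => t^2 * s) (𝓝 (0:ℝ)) (𝓝 ((0:ℝ)^2 * s)) :=
        ((continuous_pow 2).tendsto 0).mul_const s
      simpa using this.mono_left nhdsWithin_le_nhds
    have := hφ.continuousAt.tendsto.comp h1
    simpa [hφ0, Function.comp_def] using this
  -- First moment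
  have lim1 : Tendsto (fun t => ∫ a, Real.sin (t * Y a) / t ∂P) l (𝓝 (∫ a, Y a ∂P)) := by
    apply tendsto_integral_filter_of_dominated_convergence (fun a => |Y a|)
    · filter_upwards with t
      exact (((Real.continuous_sin.comp (continuous_const.mul continuous_id)).div_const
        t).comp_aestronglyMeasurable hY.aestronglyMeasurable)
    · filter_upwards [self_mem_nhdsWithin] with t ht
      filter_upwards with a
      have ht' : (0:ℝ) < t := ht
      rw [Real.norm_eq_abs, abs_div]
      rw [div_le_iff₀ (by positivity)]
      calc |Real.sin (t * Y a)| ≤ |t * Y a| := Real.abs_sin_le_abs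
        _ = |Y a| * |t| := by rw [abs_mul]; ring
    · exact hY.abs
    · filter_upwards with a
      rcases eq_or_ne (Y a) 0 with h | h
      · simpa [h] using tendsto_const_nhds
      · have := (sinc_tendsto.comp (tendsto_mul_ne (Y a) h)).mul_const (Y a)
        simp only [one_mul] at this
        refine this.congr' ?_
        filter_upwards [self_mem_nhdsWithin] with t ht
        have ht' : (t:ℝ) ≠ 0 := ne_of_gt ht
        simp only [Function.comp_apply]
        field_simp
  have lim1' : Tendsto (fun t => ∫ a, Real.sin (t * Y a) / t ∂P) l (𝓝 c) := by
    have heq : ∀ t : ℝ, ∫ a, Real.sin (t * Y a) / t ∂P = Real.sin (t*c) * φ (t^2*s) / t := by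
      intro t; rw [integral_div, hsin t]
    rw [show (fun t => ∫ a, Real.sin (t * Y a) / t ∂P) = fun t => Real.sin (t*c) * φ (t^2*s) / t
      from funext heq]
    have hsc : Tendsto (fun t : ℝ => Real.sin (t*c) / t) l (𝓝 c) := by
      rcases eq_or_ne c 0 with h | h
      · simpa [h] using tendsto_const_nhds
      · have := (sinc_tendsto.comp (tendsto_mul_ne c h)).mul_const c
        simp only [one_mul] at this
        refine this.congr' ?_
        filter_upwards [self_mem_nhdsWithin] with t ht
        have ht' : (t:ℝ) ≠ 0 := ne_of_gt ht
        simp only [Function.comp_apply]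
        field_simp
    have := hsc.mul hphicont
    simp only [mul_one] at this
    refine this.congr ?_
    intro t
    ring
  have hfirst : ∫ a, Y a ∂P = c := tendsto_nhds_unique lim1 lim1'
  -- Second moment
  have hintcos : ∀ t : ℝ, Integrable (fun a => Real.cos (t * Y a)) P := by
    intro t
    apply (integrable_const (1:ℝ)).mono' (hmeasc t)
    filter_upwards with a
    simp [Real.abs_cos_le_one]
  have lim2 : Tendsto (fun t => ∫ a, (1 - Real.cos (t * Y a)) / t^2 ∂P)
      l (𝓝 (∫ a, (Y a)^2 / 2 ∂P)) := by
    apply tendsto_integral_filter_of_dominated_convergence (fun a => (Y a)^2 / 2)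
    · filter_upwards with t
      exact ((((continuous_const.sub (Real.continuous_cos.comp
        (continuous_const.mul continuous_id))).div_const
        (t^2)).comp_aestronglyMeasurable hY.aestronglyMeasurable))
    · filter_upwards [self_mem_nhdsWithin] with t ht
      filter_upwards with a
      have ht' : (0:ℝ) < t := ht
      have h1 : (0:ℝ) ≤ 1 - Real.cos (t * Y a) := by
        have := Real.cos_le_one (t * Y a); linarith
      rw [Real.norm_eq_abs, abs_div, abs_of_nonneg h1, abs_of_pos (by positivity : (0:ℝ) < t^2)]
      rw [div_le_div_iff₀ (by positivity) (by norm_num)]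
      calc (1 - Real.cos (t * Y a)) * 2 ≤ ((t * Y a)^2 / 2) * 2 := by
            have := one_sub_cos_le_sq (t * Y a); linarith
        _ = (Y a)^2 * t^2 := by ring
    · exact hY2.div_const 2
    · filter_upwards with a
      rcases eq_or_ne (Y a) 0 with h | h
      · simpa [h] using tendsto_const_nhds
      · have := (one_sub_cos_tendsto.comp (tendsto_mul_ne (Y a) h)).mul_const ((Y a)^2)
        have h2 : (1/2 : ℝ) * (Y a)^2 = (Y a)^2/2 := by ring
        rw [h2] at this
        refine this.congr' ?_
        filter_upwards [self_mem_nhdsWithin] with t ht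
        have ht' : (t:ℝ) ≠ 0 := ne_of_gt ht
        simp only [Function.comp_apply]
        field_simp
  have lim2' : Tendsto (fun t => ∫ a, (1 - Real.cos (t * Y a)) / t^2 ∂P)
      l (𝓝 (c^2/2 - φ'0 * s)) := by
    have heq : ∀ t : ℝ, ∫ a, (1 - Real.cos (t * Y a)) / t^2 ∂P
        = (1 - Real.cos (t*c) * φ (t^2*s)) / t^2 := by
      intro t
      rw [integral_div, integral_sub (integrable_const 1) (hintcos t), hcos t]
      simp
    rw [show (fun t => ∫ a, (1 - Real.cos (t * Y a)) / t^2 ∂P)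
        = fun t => (1 - Real.cos (t*c) * φ (t^2*s)) / t^2 from funext heq]
    have hA : Tendsto (fun t : ℝ => (1 - Real.cos (t*c)) / t^2) l (𝓝 (c^2/2)) := by
      rcases eq_or_ne c 0 with h | h
      · simpa [h] using tendsto_const_nhds
      · have := (one_sub_cos_tendsto.comp (tendsto_mul_ne c h)).mul_const (c^2)
        have h2 : (1/2 : ℝ) * c^2 = c^2/2 := by ring
        rw [h2] at this
        refine this.congr' ?_
        filter_upwards [self_mem_nhdsWithin] with t ht
        have ht' : (t:ℝ) ≠ 0 := ne_of_gt ht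
        simp only [Function.comp_apply]
        field_simp
    have hB : Tendsto (fun t : ℝ => (1 - φ (t^2*s)) / t^2) l (𝓝 (-(φ'0 * s))) := by
      rcases eq_or_ne s 0 with h | h
      · simpa [h, hφ0] using tendsto_const_nhds
      · have hslope := hasDerivAt_iff_tendsto_slope.mp hφ
        have := (hslope.comp (tendsto_sq_mul_ne s h)).mul_const (-s)
        have h2 : φ'0 * (-s) = -(φ'0 * s) := by ring
        rw [h2] at this
        refine this.congr' ?_
        filter_upwards [self_mem_nhdsWithin] with t ht
        have ht' : (t:ℝ) ≠ 0 := ne_of_gt ht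
        simp only [Function.comp, slope_def_field]
        rw [hφ0]
        field_simp
        ring
    have hC : Tendsto (fun t : ℝ => Real.cos (t*c)) l (𝓝 1) := by
      have : Tendsto (fun t : ℝ => Real.cos (t*c)) (𝓝 (0:ℝ)) (𝓝 (Real.cos (0*c))) :=
        (Real.continuous_cos.comp (continuous_id.mul continuous_const)).tendsto 0
      simpa using this.mono_left nhdsWithin_le_nhds
    have := hA.add (hC.mul hB)
    have h3 : c^2/2 + 1 * -(φ'0 * s) = c^2/2 - φ'0 * s := by ring
    rw [h3] at this
    refine this.congr ?_
    intro t
    ring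
  have hsecond2 : ∫ a, (Y a)^2 / 2 ∂P = c^2/2 - φ'0 * s := tendsto_nhds_unique lim2 lim2'
  rw [integral_div] at hsecond2
  exact ⟨hfirst, by linarith⟩
open MeasureTheory Matrix Filter Topology

lemma reim {α : Type*} [MeasurableSpace α] (P : Measure α) [IsProbabilityMeasure P]
    (g : α → ℝ) (hg : AEStronglyMeasurable g P) (c' r : ℝ)
    (h : ∫ a, Complex.exp (Complex.I * (g a : ℂ)) ∂P
        = Complex.exp (Complex.I * (c' : ℂ)) * (r : ℂ)) :
    (∫ a, Real.sin (g a) ∂P = Real.sin c' * r) ∧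
      (∫ a, Real.cos (g a) ∂P = Real.cos c' * r) := by
  have hint : Integrable (fun a => Complex.exp (Complex.I * (g a : ℂ))) P := by
    apply (integrable_const (1:ℝ)).mono'
    · exact (Complex.continuous_exp.comp
        (continuous_const.mul Complex.continuous_ofReal)).comp_aestronglyMeasurable hg
    · filter_upwards with a
      rw [Complex.norm_exp]
      simp
  constructor
  · have h2 := integral_im hint
    simp only [RCLike.im_to_complex] at h2
    rw [h] at h2
    simpa [mul_comm Complex.I, Complex.exp_ofReal_mul_I_im, Complex.exp_ofReal_mul_I_re,
      Complex.mul_im, Complex.ofReal_im, Complex.ofReal_re] using h2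
  · have h2 := integral_re hint
    simp only [RCLike.re_to_complex] at h2
    rw [h] at h2
    simpa [mul_comm Complex.I, Complex.exp_ofReal_mul_I_im, Complex.exp_ofReal_mul_I_re,
      Complex.mul_re, Complex.ofReal_im, Complex.ofReal_re] using h2

lemma trace_formula {p q : ℕ} (Sig : Matrix (Fin q) (Fin q) ℝ) (T : Matrix (Fin p) (Fin q) ℝ) :
    (Sig * Tᵀ * T).trace = ∑ a, ∑ c, (∑ b, Sig a b * T c b) * T c a := by
  simp [Matrix.trace, Matrix.diag, Matrix.mul_apply, Matrix.transpose_apply]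

theorem stmt18 (p q : ℕ) (hpq : q < p)
    (μ : Fin q → ℝ) (Sig : Matrix (Fin q) (Fin q) ℝ) (hSig : Sig.PosDef)
    (φ : ℝ → ℝ) (φ'0 : ℝ) (hφ : HasDerivAt φ φ'0 0)
    (P : Measure (Fin p → Fin q → ℝ)) [IsProbabilityMeasure P]
    (hchar : ∀ T : Matrix (Fin p) (Fin q) ℝ,
      ∫ X, Complex.exp (Complex.I * ((∑ k, ∑ j, T k j * X k j : ℝ) : ℂ)) ∂P
        = Complex.exp (Complex.I * ((∑ k, ∑ j, T k j * μ j : ℝ) : ℂ)) *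
            (φ ((Sig * Tᵀ * T).trace) : ℂ))
    (hmom1 : ∀ k j, Integrable (fun X : Fin p → Fin q → ℝ => X k j) P)
    (hmom2 : ∀ k l i j, Integrable (fun X : Fin p → Fin q → ℝ => X k i * X l j) P) :
    (∀ j, ∫ X, (∑ k, X k j) / p ∂P = μ j) ∧
      (∀ i j,
        ∫ X, (∑ k, (X k i - (∑ l, X l i) / p) * (X k j - (∑ l, X l j) / p)) ∂P
          = -2 * ((p : ℝ) - 1) * φ'0 * Sig i j) := by
  classical
  have hp0 : 0 < p := lt_of_le_of_lt (Nat.zero_le q) hpq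
  have hpr : (p:ℝ) ≠ 0 := by exact_mod_cast hp0.ne'
  -- φ 0 = 1
  have hφ0 : φ 0 = 1 := by
    have h := hchar 0
    simp only [Matrix.zero_apply, zero_mul, Finset.sum_const_zero, Complex.ofReal_zero,
      mul_zero, Complex.exp_zero, Matrix.transpose_zero, Matrix.mul_zero,
      Matrix.trace_zero, one_mul, integral_const, measure_univ, probReal_univ,
      one_smul] at h
    exact_mod_cast h.symm
  -- continuity / integrability of linear statistics
  have hYcont : ∀ T : Matrix (Fin p) (Fin q) ℝ,
      Continuous (fun X : Fin p → Fin q → ℝ => ∑ k, ∑ j, T k j * X k j) := by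
    intro T
    apply continuous_finset_sum; intro k _
    apply continuous_finset_sum; intro j _
    exact continuous_const.mul ((continuous_apply j).comp (continuous_apply k))
  have hYint : ∀ T : Matrix (Fin p) (Fin q) ℝ,
      Integrable (fun X : Fin p → Fin q → ℝ => ∑ k, ∑ j, T k j * X k j) P := by
    intro T
    apply integrable_finset_sum; intro k _
    apply integrable_finset_sum; intro j _
    exact (hmom1 k j).const_mul _
  have hY2int : ∀ T : Matrix (Fin p) (Fin q) ℝ,
      Integrable (fun X : Fin p → Fin q → ℝ => (∑ k, ∑ j, T k j * X k j)^2) P := by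
    intro T
    have e : (fun X : Fin p → Fin q → ℝ => (∑ k, ∑ j, T k j * X k j)^2)
        = fun X => ∑ k, ∑ l, ∑ j, ∑ i, (T k j * T l i) * (X k j * X l i) := by
      funext X
      rw [sq, Finset.sum_mul_sum]
      refine Finset.sum_congr rfl fun k _ => ?_
      refine Finset.sum_congr rfl fun l _ => ?_
      rw [Finset.sum_mul_sum]
      refine Finset.sum_congr rfl fun j _ => ?_
      refine Finset.sum_congr rfl fun i _ => ?_
      ring
    rw [e]
    apply integrable_finset_sum; intro k _
    apply integrable_finset_sum; intro l _
    apply integrable_finset_sum; intro j _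
    apply integrable_finset_sum; intro i _
    exact (hmom2 k l j i).const_mul _
  -- key moment identities from the characteristic function
  have key : ∀ T : Matrix (Fin p) (Fin q) ℝ,
      (∫ X, (∑ k, ∑ j, T k j * X k j) ∂P = ∑ k, ∑ j, T k j * μ j) ∧
      (∫ X, (∑ k, ∑ j, T k j * X k j)^2 ∂P
        = (∑ k, ∑ j, T k j * μ j)^2 - 2*φ'0*((Sig * Tᵀ * T).trace)) := by
    intro T
    have both : ∀ t : ℝ,
        (∫ X, Real.sin (t * (∑ k, ∑ j, T k j * X k j)) ∂P
          = Real.sin (t * (∑ k, ∑ j, T k j * μ j)) * φ (t^2 * (Sig * Tᵀ * T).trace)) ∧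
        (∫ X, Real.cos (t * (∑ k, ∑ j, T k j * X k j)) ∂P
          = Real.cos (t * (∑ k, ∑ j, T k j * μ j)) * φ (t^2 * (Sig * Tᵀ * T).trace)) := by
      intro t
      have h := hchar (t • T)
      have e1 : ∀ v : Fin p → Fin q → ℝ, (∑ k, ∑ j, (t • T) k j * v k j)
          = t * (∑ k, ∑ j, T k j * v k j) := by
        intro v
        simp [Matrix.smul_apply, smul_eq_mul, Finset.mul_sum, mul_assoc]
      have e3 : (Sig * (t • T)ᵀ * (t • T)).trace = t^2 * (Sig * Tᵀ * T).trace := by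
        simp only [Matrix.transpose_smul, Matrix.smul_mul, Matrix.mul_smul,
          Matrix.trace_smul, smul_smul, smul_eq_mul]
        ring
      simp only [e1, e3] at h
      exact reim P _ ((continuous_const.mul (hYcont T)).aestronglyMeasurable) _ _ h
    exact scalar_moments P _ (hYint T) (hY2int T) φ φ'0 hφ hφ0 _ _
      (fun t => (both t).1) (fun t => (both t).2)
  -- symmetry of Sig
  have hsym : ∀ a b, Sig a b = Sig b a := by
    intro a b
    have h := hSig.1
    have h2 := congrFun (congrFun h b) a
    simpa [Matrix.conjTranspose_apply] using h2
  -- single-entry test matrices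
  set S : Fin p → Fin q → Matrix (Fin p) (Fin q) ℝ :=
    fun k i => Matrix.of fun a b => (if a = k then (1:ℝ) else 0) * (if b = i then 1 else 0)
    with hS
  have sum_single : ∀ k i (v : Fin p → Fin q → ℝ),
      (∑ a, ∑ b, (S k i) a b * v a b) = v k i := by
    intro k i v
    simp [hS, ite_mul, mul_ite, zero_mul, mul_zero, one_mul,
      Finset.sum_ite_eq', Finset.mem_univ]
  have trace_single : ∀ k i, (Sig * (S k i)ᵀ * (S k i)).trace = Sig i i := by
    intro k i
    rw [trace_formula]
    simp [hS, ite_mul, mul_ite, zero_mul, mul_zero, mul_one, one_mul,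
      Finset.sum_ite_eq', Finset.mem_univ]
  -- first moments
  have m1 : ∀ k j, ∫ X, X k j ∂P = μ j := by
    intro k j
    have h := (key (S k j)).1
    simp only [sum_single] at h
    exact h
  -- pure second moments
  have m2diag : ∀ k i, ∫ X, X k i * X k i ∂P = μ i * μ i - 2*φ'0*Sig i i := by
    intro k i
    have h := (key (S k i)).2
    simp only [sum_single, trace_single] at h
    have e : (fun X : Fin p → Fin q → ℝ => X k i * X k i)
        = fun X => (X k i)^2 := by funext X; ring
    rw [e]
    rw [h]; ring
  -- pair test matrices
  have sum_pair : ∀ k i l j (v : Fin p → Fin q → ℝ),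
      (∑ a, ∑ b, (S k i + S l j) a b * v a b) = v k i + v l j := by
    intro k i l j v
    have : ∀ a b, (S k i + S l j) a b * v a b
        = (S k i) a b * v a b + (S l j) a b * v a b := by
      intro a b; simp [Matrix.add_apply, add_mul]
    simp only [this, Finset.sum_add_distrib, sum_single]
  have trace_pair : ∀ k i l j, (Sig * (S k i + S l j)ᵀ * (S k i + S l j)).trace
      = Sig i i + Sig j j + (if k = l then 2 * Sig i j else 0) := by
    intro k i l j
    rw [trace_formula]
    by_cases hkl : k = l
    · subst hkl
      simp only [if_true]
      simp [hS, Matrix.add_apply, ite_mul, mul_ite, zero_mul, mul_zero, mul_one, one_mul,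
        mul_add, add_mul, Finset.sum_add_distrib, Finset.sum_ite_eq', Finset.mem_univ]
      rw [hsym j i]; ring
    · have hkl' : ¬ l = k := fun h => hkl h.symm
      simp only [if_neg hkl]
      simp [hS, Matrix.add_apply, ite_mul, mul_ite, zero_mul, mul_zero, mul_one, one_mul,
        mul_add, add_mul, Finset.sum_add_distrib, Finset.sum_ite_eq', Finset.mem_univ, hkl, hkl']
  -- mixed second moments
  have m2 : ∀ k l i j, ∫ X, X k i * X l j ∂P
      = μ i * μ j + (if k = l then -(2*φ'0*Sig i j) else 0) := by
    intro k l i j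
    by_cases hpair : k = l ∧ i = j
    · obtain ⟨hkl, hij⟩ := hpair
      subst hkl; subst hij
      simp only [if_true]
      rw [m2diag k i]; ring
    · have h := (key (S k i + S l j)).2
      simp only [sum_pair, trace_pair] at h
      have hexp : (fun X : Fin p → Fin q → ℝ => (X k i + X l j)^2)
          = fun X => (X k i * X k i) + (2 * (X k i * X l j) + X l j * X l j) := by
        funext X; ring
      rw [hexp] at h
      have hg1 : Integrable (fun X : Fin p → Fin q → ℝ => 2 * (X k i * X l j)) P :=
        (hmom2 k l i j).const_mul 2
      have hg2 : Integrable (fun X : Fin p → Fin q → ℝ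
          => 2 * (X k i * X l j) + X l j * X l j) P := hg1.add (hmom2 l l j j)
      rw [integral_add (hmom2 k k i i) hg2, integral_add hg1 (hmom2 l l j j),
        integral_const_mul, m2diag k i, m2diag l j] at h
      by_cases hkl : k = l
      · simp only [if_pos hkl] at h ⊢
        nlinarith [h]
      · simp only [if_neg hkl] at h ⊢
        nlinarith [h]
  constructor
  · -- sample mean unbiased
    intro j
    rw [integral_div, integral_finset_sum Finset.univ (fun k _ => hmom1 k j)]
    simp only [m1]
    rw [Finset.sum_const, Finset.card_univ, Fintype.card_fin, nsmul_eq_mul]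
    field_simp
  · -- sample covariance
    intro i j
    have expand : ∀ X : Fin p → Fin q → ℝ,
        (∑ k, (X k i - (∑ l, X l i) / p) * (X k j - (∑ l, X l j) / p))
        = (∑ k, X k i * X k j) - (∑ k, X k i) * (∑ k, X k j) / p := by
      intro X
      have hterm : ∀ k : Fin p, (X k i - (∑ l, X l i)/p) * (X k j - (∑ l, X l j)/p)
          = X k i * X k j - ((∑ l, X l j)/p) * X k i - ((∑ l, X l i)/p) * X k j
            + ((∑ l, X l i)/p)*((∑ l, X l j)/p) := by intro k; ring
      rw [Finset.sum_congr rfl fun k _ => hterm k]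
      rw [Finset.sum_add_distrib, Finset.sum_sub_distrib, Finset.sum_sub_distrib,
        ← Finset.mul_sum, ← Finset.mul_sum, Finset.sum_const, Finset.card_univ,
        Fintype.card_fin, nsmul_eq_mul]
      field_simp
      ring
    simp only [expand]
    have hSS : (fun X : Fin p → Fin q → ℝ => (∑ k, X k i) * (∑ k, X k j))
        = fun X => ∑ k, ∑ l, X k i * X l j := by
      funext X; rw [Finset.sum_mul_sum]
    have intSS : Integrable (fun X : Fin p → Fin q → ℝ => (∑ k, X k i) * (∑ k, X k j)) P := by
      rw [hSS]
      apply integrable_finset_sum; intro k _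
      apply integrable_finset_sum; intro l _
      exact hmom2 k l i j
    have int1 : Integrable (fun X : Fin p → Fin q → ℝ => ∑ k, X k i * X k j) P :=
      integrable_finset_sum _ fun k _ => hmom2 k k i j
    rw [integral_sub int1 (intSS.div_const _), integral_finset_sum Finset.univ
      (fun k _ => hmom2 k k i j), integral_div]
    have hI1 : ∑ k : Fin p, ∫ X, X k i * X k j ∂P
        = p * (μ i * μ j + -(2*φ'0*Sig i j)) := by
      have hk : ∀ k : Fin p, ∫ X, X k i * X k j ∂P = μ i * μ j + -(2*φ'0*Sig i j) := by
        intro k; rw [m2 k k i j]; simp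
      rw [Finset.sum_congr rfl fun k _ => hk k, Finset.sum_const, Finset.card_univ,
        Fintype.card_fin, nsmul_eq_mul]
    have hI2 : ∫ X, (∑ k, X k i) * (∑ k, X k j) ∂P
        = p^2 * (μ i * μ j) + p * (-(2*φ'0*Sig i j)) := by
      rw [hSS, integral_finset_sum Finset.univ
        (fun k _ => integrable_finset_sum _ fun l _ => hmom2 k l i j)]
      have : ∀ k : Fin p, ∫ X, (∑ l, X k i * X l j) ∂P
          = ∑ l : Fin p, (μ i * μ j + (if k = l then -(2*φ'0*Sig i j) else 0)) := by
        intro k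
        rw [integral_finset_sum Finset.univ (fun l _ => hmom2 k l i j)]
        exact Finset.sum_congr rfl fun l _ => m2 k l i j
      rw [Finset.sum_congr rfl fun k _ => this k]
      simp [Finset.sum_add_distrib, Finset.sum_ite_eq, Finset.sum_ite_eq',
        Finset.sum_const, Finset.card_univ, Fintype.card_fin, nsmul_eq_mul]
      ring
    rw [hI1, hI2]
    field_simp
    ring
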